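/- arXiv:2309.03625 — 2 statements merged into one kernel-verified Lean document; each statement's English description precedes it below -/
import Mathlib

section
/- Let H be a positive self-adjoint operator on ℋ, ψ ∈ ℋ, τ in the open lower half-plane, and k ∈ ℕ. Then the k-th complex derivative of the map τ ↦ e^{-iτH}ψ equals (-i)^k H^k e^{-iτH}ψ; i.e., (i d/dτ)^k e^{-iτH}ψ = H^k e^{-iτH}ψ. -/
open MeasureTheory Complex

private lemma pow_le_factorial_mul_exp (k : ℕ) {s : ℝ} (hs : 0 ≤ s) :
    s ^ k ≤ (Nat.factorial k : ℝ) * Real.exp s := by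
  have hk : (0 : ℝ) < (Nat.factorial k : ℝ) := by positivity
  have h1 : s ^ k / (Nat.factorial k : ℝ) ≤ Real.exp s := by
    refine le_trans ?_ (Real.sum_le_exp_of_nonneg hs (k + 1))
    exact Finset.single_le_sum (f := fun i => s ^ i / (Nat.factorial i : ℝ))
      (fun i _ => by positivity) (Finset.self_mem_range_succ k)
  calc s ^ k = s ^ k / (Nat.factorial k : ℝ) * (Nat.factorial k : ℝ) := by field_simp
    _ ≤ Real.exp s * (Nat.factorial k : ℝ) :=
        mul_le_mul_of_nonneg_right h1 hk.le
    _ = (Nat.factorial k : ℝ) * Real.exp s := mul_comm _ _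

private lemma pow_mul_exp_le (k : ℕ) {b t : ℝ} (hb : b < 0) (ht : 0 ≤ t) :
    t ^ k * Real.exp (b * t) ≤ (Nat.factorial k : ℝ) / (-b) ^ k := by
  have hb' : (0 : ℝ) < -b := neg_pos.2 hb
  rw [le_div_iff₀ (by positivity)]
  have h1 := pow_le_factorial_mul_exp k (s := (-b) * t) (by positivity)
  calc t ^ k * Real.exp (b * t) * (-b) ^ k
      = ((-b) * t) ^ k * Real.exp (b * t) := by rw [mul_pow]; ring
    _ ≤ ((Nat.factorial k : ℝ) * Real.exp ((-b) * t)) * Real.exp (b * t) :=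
        mul_le_mul_of_nonneg_right h1 (Real.exp_pos _).le
    _ = (Nat.factorial k : ℝ) * Real.exp ((-b) * t + b * t) := by
        rw [Real.exp_add]; ring
    _ = (Nat.factorial k : ℝ) := by
        rw [show (-b) * t + b * t = 0 by ring, Real.exp_zero, mul_one]

private lemma re_neg_I_mul (τ : ℂ) (c : ℝ) : (-(I * τ * (c : ℂ))).re = τ.im * c := by
  simp [Complex.mul_re]

private lemma abs_exp_neg_I_mul (τ : ℂ) (c : ℝ) :
    ‖Complex.exp (-(I * τ * (c : ℂ)))‖ = Real.exp (τ.im * c) := by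
  rw [Complex.norm_exp, re_neg_I_mul]

/-- Second-order Taylor bound for the exponential with decay. -/
private lemma exp_taylor_bound {b₀ : ℝ} {c : ℝ} (hc : 0 ≤ c)
    {τ τ' : ℂ} (h1 : τ.im * c ≤ b₀ * c) (h2 : τ'.im * c ≤ b₀ * c) :
    ‖Complex.exp (-(I * τ' * (c : ℂ))) - Complex.exp (-(I * τ * (c : ℂ)))
      - -(I * (τ' - τ) * (c : ℂ)) * Complex.exp (-(I * τ * (c : ℂ)))‖
      ≤ 3 * ‖τ' - τ‖ ^ 2 * (c ^ 2 * Real.exp (b₀ * c)) := by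
  set u : ℂ := -(I * (τ' - τ) * (c : ℂ)) with hu
  have habsu : ‖u‖ = ‖τ' - τ‖ * c := by
    rw [hu]
    rw [norm_neg, norm_mul, norm_mul, Complex.norm_I, one_mul, Complex.norm_real, Real.norm_eq_abs,
      _root_.abs_of_nonneg hc]
  have hsplit : -(I * τ' * (c : ℂ)) = -(I * τ * (c : ℂ)) + u := by rw [hu]; ring
  have key : Complex.exp (-(I * τ' * (c : ℂ))) - Complex.exp (-(I * τ * (c : ℂ)))
      - u * Complex.exp (-(I * τ * (c : ℂ)))
      = Complex.exp (-(I * τ * (c : ℂ))) * (Complex.exp u - 1 - u) := by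
    rw [hsplit, Complex.exp_add]; ring
  rw [key, norm_mul, abs_exp_neg_I_mul]
  have hA : (0 : ℝ) ≤ ‖τ' - τ‖ := norm_nonneg _
  have hexp1 : Real.exp (τ.im * c) ≤ Real.exp (b₀ * c) := Real.exp_le_exp.2 h1
  rcases le_or_gt (‖u‖) 1 with hle | hgt
  · have hb := Complex.norm_exp_sub_one_sub_id_le hle
    calc Real.exp (τ.im * c) * ‖Complex.exp u - 1 - u‖
        ≤ Real.exp (b₀ * c) * (‖u‖ ^ 2) :=
          mul_le_mul hexp1 hb (norm_nonneg _) (Real.exp_pos _).le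
      _ = ‖τ' - τ‖ ^ 2 * (c ^ 2 * Real.exp (b₀ * c)) := by
          rw [habsu]; ring
      _ ≤ 3 * ‖τ' - τ‖ ^ 2 * (c ^ 2 * Real.exp (b₀ * c)) := by
          nlinarith [sq_nonneg (‖τ' - τ‖), sq_nonneg c, (Real.exp_pos (b₀ * c)).le,
            mul_nonneg (mul_nonneg (sq_nonneg (‖τ' - τ‖)) (sq_nonneg c))
              (Real.exp_pos (b₀ * c)).le]
  · -- `|u| > 1`
    have htri : ‖Complex.exp u - 1 - u‖
        ≤ ‖Complex.exp u‖ + (1 + ‖u‖) := by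
      calc ‖Complex.exp u - 1 - u‖
          ≤ ‖Complex.exp u - 1‖ + ‖u‖ := by
            simpa using norm_sub_le (Complex.exp u - 1) u
        _ ≤ (‖Complex.exp u‖ + 1) + ‖u‖ := by
            have := norm_sub_le (Complex.exp u) 1
            simpa using add_le_add_right this (‖u‖)
        _ = ‖Complex.exp u‖ + (1 + ‖u‖) := by ring
    have hre : τ.im * c + u.re = τ'.im * c := by
      have := congrArg Complex.re hsplit
      rw [re_neg_I_mul, Complex.add_re, re_neg_I_mul] at this
      linarith
    have e1 : Real.exp (τ.im * c) * ‖Complex.exp u‖ = Real.exp (τ'.im * c) := by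
      rw [Complex.norm_exp, ← Real.exp_add, hre]
    have hexp2 : Real.exp (τ'.im * c) ≤ Real.exp (b₀ * c) := Real.exp_le_exp.2 h2
    have hAU : ‖u‖ ≥ 1 := hgt.le
    calc Real.exp (τ.im * c) * ‖Complex.exp u - 1 - u‖
        ≤ Real.exp (τ.im * c) * (‖Complex.exp u‖ + (1 + ‖u‖)) :=
          mul_le_mul_of_nonneg_left htri (Real.exp_pos _).le
      _ = Real.exp (τ'.im * c) + Real.exp (τ.im * c) * (1 + ‖u‖) := by
          rw [mul_add, e1]
      _ ≤ Real.exp (b₀ * c) + Real.exp (b₀ * c) * (1 + ‖u‖) := by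
          have h3 : (0 : ℝ) ≤ 1 + ‖u‖ := by positivity
          exact add_le_add hexp2 (mul_le_mul_of_nonneg_right hexp1 h3)
      _ = (2 + ‖u‖) * Real.exp (b₀ * c) := by ring
      _ ≤ 3 * ‖u‖ ^ 2 * Real.exp (b₀ * c) := by
          have : 2 + ‖u‖ ≤ 3 * ‖u‖ ^ 2 := by nlinarith
          exact mul_le_mul_of_nonneg_right this (Real.exp_pos _).le
      _ = 3 * ‖τ' - τ‖ ^ 2 * (c ^ 2 * Real.exp (b₀ * c)) := by
          rw [habsu]; ring

section Evol

variable {X : Type*} [MeasurableSpace X] {μ : Measure X}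

/-- The explicit pointwise functions `x ↦ (-i h x)^k e^{-iτ h x} ψ x`. -/
private noncomputable def evolFun (h : X → ℝ) (ψ : X → ℂ) (k : ℕ) (τ : ℂ) (x : X) : ℂ :=
  (-I * (h x : ℂ)) ^ k * (Complex.exp (-(I * τ * (h x : ℂ))) * ψ x)

private lemma evolFun_aesm {h : X → ℝ} (hmeas : Measurable h) (ψ : Lp ℂ 2 μ) (k : ℕ) (τ : ℂ) :
    AEStronglyMeasurable (evolFun h (⇑ψ) k τ) μ := by
  have m1 : Measurable fun x => (h x : ℂ) := Complex.measurable_ofReal.comp hmeas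
  have m2 : Measurable fun x => (-I * (h x : ℂ)) ^ k * Complex.exp (-(I * τ * (h x : ℂ))) := by
    exact ((measurable_const.mul m1).pow_const k).mul
      (Complex.continuous_exp.measurable.comp ((measurable_const.mul m1).neg))
  refine AEStronglyMeasurable.congr
    (m2.aestronglyMeasurable.mul (Lp.aestronglyMeasurable ψ)) ?_
  filter_upwards with x
  simp [evolFun]; ring

private lemma evolFun_abs {h : X → ℝ} (hpos : ∀ x, 0 ≤ h x) (ψ : X → ℂ) (k : ℕ) (τ : ℂ)
    (x : X) :
    ‖evolFun h ψ k τ x‖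
      = h x ^ k * Real.exp (τ.im * h x) * ‖ψ x‖ := by
  rw [evolFun, norm_mul, norm_mul, norm_pow, abs_exp_neg_I_mul, norm_mul, norm_neg,
    Complex.norm_I, one_mul, Complex.norm_real, Real.norm_eq_abs, _root_.abs_of_nonneg (hpos x)]
  ring

private lemma evolFun_memLp {h : X → ℝ} (hmeas : Measurable h) (hpos : ∀ x, 0 ≤ h x)
    (ψ : Lp ℂ 2 μ) (k : ℕ) {τ : ℂ} (hτ : τ.im < 0) :
    MemLp (evolFun h (⇑ψ) k τ) 2 μ := by
  refine MemLp.of_le_mul (c := (Nat.factorial k : ℝ) / (-τ.im) ^ k) (Lp.memLp ψ)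
    (evolFun_aesm hmeas ψ k τ) ?_
  filter_upwards with x
  rw [evolFun_abs hpos]
  exact mul_le_mul_of_nonneg_right (pow_mul_exp_le k hτ (hpos x)) (norm_nonneg _)

/-- The curve of `Lp` elements. -/
private noncomputable def evolLp (μ : Measure X) (h : X → ℝ) (hmeas : Measurable h)
    (hpos : ∀ x, 0 ≤ h x) (ψ : Lp ℂ 2 μ) (k : ℕ) (τ : ℂ) : Lp ℂ 2 μ :=
  if hτ : τ.im < 0 then (evolFun_memLp hmeas hpos ψ k hτ).toLp _ else 0

private lemma evolLp_coeFn {h : X → ℝ} (hmeas : Measurable h) (hpos : ∀ x, 0 ≤ h x)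
    (ψ : Lp ℂ 2 μ) (k : ℕ) {τ : ℂ} (hτ : τ.im < 0) :
    (⇑(evolLp μ h hmeas hpos ψ k τ) : X → ℂ) =ᵐ[μ] evolFun h (⇑ψ) k τ := by
  rw [evolLp, dif_pos hτ]
  exact MemLp.coeFn_toLp _

/-- The key quantitative second-order estimate in `L²`. -/
private lemma evol_key {h : X → ℝ} (hmeas : Measurable h) (hpos : ∀ x, 0 ≤ h x)
    (ψ : Lp ℂ 2 μ) (k : ℕ) {τ τ' : ℂ} (hτ : τ.im < 0) (hτ' : τ'.im < 0)
    (hclose : ‖τ' - τ‖ ≤ -τ.im / 2) :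
    ‖evolLp μ h hmeas hpos ψ k τ' - evolLp μ h hmeas hpos ψ k τ
        - (τ' - τ) • evolLp μ h hmeas hpos ψ (k + 1) τ‖
      ≤ (3 * ((Nat.factorial (k + 2) : ℝ) / (-(τ.im / 2)) ^ (k + 2))
          * ‖τ' - τ‖ ^ 2) * ‖ψ‖ := by
  set b₀ : ℝ := τ.im / 2 with hb₀
  have hb₀neg : b₀ < 0 := by rw [hb₀]; linarith
  set C : ℝ := 3 * ((Nat.factorial (k + 2) : ℝ) / (-b₀) ^ (k + 2))
      * ‖τ' - τ‖ ^ 2 with hC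
  have hCnonneg : 0 ≤ C := by
    have : (0:ℝ) < -b₀ := neg_pos.2 hb₀neg
    positivity
  have hτ'b : τ'.im ≤ b₀ := by
    have h1 : τ'.im - τ.im ≤ |(τ' - τ).im| := by
      rw [Complex.sub_im]; exact le_abs_self _
    have h2 := Complex.abs_im_le_norm (τ' - τ)
    rw [hb₀]; linarith
  have hτb : τ.im ≤ b₀ := by rw [hb₀]; linarith
  -- pointwise bound
  have hpt : ∀ x, ‖evolFun h (⇑ψ) k τ' x - evolFun h (⇑ψ) k τ x
      - (τ' - τ) * evolFun h (⇑ψ) (k + 1) τ x‖ ≤ C * ‖ψ x‖ := by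
    intro x
    set c : ℝ := h x with hc
    have hc0 : 0 ≤ c := hpos x
    have alg : evolFun h (⇑ψ) k τ' x - evolFun h (⇑ψ) k τ x
        - (τ' - τ) * evolFun h (⇑ψ) (k + 1) τ x
        = (-I * (c : ℂ)) ^ k
          * ((Complex.exp (-(I * τ' * (c : ℂ))) - Complex.exp (-(I * τ * (c : ℂ)))
            - -(I * (τ' - τ) * (c : ℂ)) * Complex.exp (-(I * τ * (c : ℂ)))) * ψ x) := by
      simp only [evolFun, pow_succ, ← hc]; ring
    rw [alg, norm_mul, norm_mul, norm_pow]
    have habsc : ‖-I * (c : ℂ)‖ = c := by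
      rw [norm_mul, norm_neg, Complex.norm_I, one_mul, Complex.norm_real, Real.norm_eq_abs,
        _root_.abs_of_nonneg hc0]
    rw [habsc]
    have hbound := exp_taylor_bound (b₀ := b₀) hc0
      (mul_le_mul_of_nonneg_right hτb hc0) (mul_le_mul_of_nonneg_right hτ'b hc0)
      (τ := τ) (τ' := τ')
    have hfact : c ^ k * (c ^ 2 * Real.exp (b₀ * c))
        ≤ (Nat.factorial (k + 2) : ℝ) / (-b₀) ^ (k + 2) := by
      have : c ^ k * (c ^ 2 * Real.exp (b₀ * c)) = c ^ (k + 2) * Real.exp (b₀ * c) := by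
        rw [pow_add]; ring
      rw [this]
      exact pow_mul_exp_le (k + 2) hb₀neg hc0
    calc c ^ k * (‖Complex.exp (-(I * τ' * (c : ℂ)))
            - Complex.exp (-(I * τ * (c : ℂ)))
            - -(I * (τ' - τ) * (c : ℂ)) * Complex.exp (-(I * τ * (c : ℂ)))‖ * ‖ψ x‖)
        ≤ c ^ k * ((3 * ‖τ' - τ‖ ^ 2 * (c ^ 2 * Real.exp (b₀ * c)))
            * ‖ψ x‖) := by
          refine mul_le_mul_of_nonneg_left
            (mul_le_mul_of_nonneg_right hbound (norm_nonneg _)) (by positivity)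
      _ = (3 * ‖τ' - τ‖ ^ 2) * (c ^ k * (c ^ 2 * Real.exp (b₀ * c)))
            * ‖ψ x‖ := by ring
      _ ≤ (3 * ‖τ' - τ‖ ^ 2)
            * ((Nat.factorial (k + 2) : ℝ) / (-b₀) ^ (k + 2)) * ‖ψ x‖ := by
          refine mul_le_mul_of_nonneg_right
            (mul_le_mul_of_nonneg_left hfact (by positivity)) (norm_nonneg _)
      _ = C * ‖ψ x‖ := by rw [hC]; ring
  -- lift to the `L²` norm
  have hdiff : (⇑(evolLp μ h hmeas hpos ψ k τ' - evolLp μ h hmeas hpos ψ k τ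
      - (τ' - τ) • evolLp μ h hmeas hpos ψ (k + 1) τ) : X → ℂ)
      =ᵐ[μ] fun x => evolFun h (⇑ψ) k τ' x - evolFun h (⇑ψ) k τ x
        - (τ' - τ) * evolFun h (⇑ψ) (k + 1) τ x := by
    filter_upwards [Lp.coeFn_sub (evolLp μ h hmeas hpos ψ k τ' - evolLp μ h hmeas hpos ψ k τ)
        ((τ' - τ) • evolLp μ h hmeas hpos ψ (k + 1) τ),
      Lp.coeFn_sub (evolLp μ h hmeas hpos ψ k τ') (evolLp μ h hmeas hpos ψ k τ),
      Lp.coeFn_smul (τ' - τ) (evolLp μ h hmeas hpos ψ (k + 1) τ),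
      evolLp_coeFn hmeas hpos ψ k hτ', evolLp_coeFn hmeas hpos ψ k hτ,
      evolLp_coeFn hmeas hpos ψ (k + 1) hτ] with x e1 e2 e3 e4 e5 e6
    rw [e1, Pi.sub_apply, e2, Pi.sub_apply, e3, Pi.smul_apply, e4, e5, e6, smul_eq_mul]
  have hsmul : (⇑(C • ψ) : X → ℂ) =ᵐ[μ] fun x => (C : ℝ) • ψ x := Lp.coeFn_smul C ψ
  have hle : ‖evolLp μ h hmeas hpos ψ k τ' - evolLp μ h hmeas hpos ψ k τ
      - (τ' - τ) • evolLp μ h hmeas hpos ψ (k + 1) τ‖ ≤ ‖C • ψ‖ := by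
    refine Lp.norm_le_norm_of_ae_le ?_
    filter_upwards [hdiff, hsmul] with x e1 e2
    rw [e1, e2]
    calc ‖evolFun h (⇑ψ) k τ' x - evolFun h (⇑ψ) k τ x
          - (τ' - τ) * evolFun h (⇑ψ) (k + 1) τ x‖ ≤ C * ‖ψ x‖ := hpt x
      _ = ‖(C : ℝ) • ψ x‖ := by rw [norm_smul, Real.norm_eq_abs, _root_.abs_of_nonneg hCnonneg]
  calc ‖evolLp μ h hmeas hpos ψ k τ' - evolLp μ h hmeas hpos ψ k τ
        - (τ' - τ) • evolLp μ h hmeas hpos ψ (k + 1) τ‖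
      ≤ ‖C • ψ‖ := hle
    _ = C * ‖ψ‖ := by rw [norm_smul, Real.norm_eq_abs, _root_.abs_of_nonneg hCnonneg]

private lemma evol_hasDeriv {h : X → ℝ} (hmeas : Measurable h) (hpos : ∀ x, 0 ≤ h x)
    (ψ : Lp ℂ 2 μ) (k : ℕ) {τ : ℂ} (hτ : τ.im < 0) :
    HasDerivWithinAt (evolLp μ h hmeas hpos ψ k) (evolLp μ h hmeas hpos ψ (k + 1) τ)
      {τ' : ℂ | τ'.im < 0} τ := by
  rw [hasDerivWithinAt_iff_isLittleO]
  have hball : ∀ᶠ τ' in nhdsWithin τ {τ' : ℂ | τ'.im < 0},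
      ‖τ' - τ‖ ≤ -τ.im / 2 ∧ τ'.im < 0 := by
    have h1 : ∀ᶠ τ' in nhds τ, ‖τ' - τ‖ ≤ -τ.im / 2 := by
      have hpos' : (0 : ℝ) < -τ.im / 2 := by linarith
      filter_upwards [Metric.closedBall_mem_nhds τ hpos'] with τ' hτ'
      rw [Metric.mem_closedBall, Complex.dist_eq] at hτ'
      exact hτ'
    exact (Filter.Eventually.filter_mono nhdsWithin_le_nhds h1).and
      (eventually_mem_nhdsWithin)
  have hbig : (fun τ' => evolLp μ h hmeas hpos ψ k τ' - evolLp μ h hmeas hpos ψ k τ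
      - (τ' - τ) • evolLp μ h hmeas hpos ψ (k + 1) τ)
      =O[nhdsWithin τ {τ' : ℂ | τ'.im < 0}] fun τ' => ‖τ' - τ‖ ^ 2 := by
    rw [Asymptotics.isBigO_iff]
    refine ⟨(3 * ((Nat.factorial (k + 2) : ℝ) / (-(τ.im / 2)) ^ (k + 2))) * ‖ψ‖, ?_⟩
    filter_upwards [hball] with τ' hτ'
    rcases hτ' with ⟨hc, hin⟩
    have := evol_key hmeas hpos ψ k hτ hin hc
    calc ‖evolLp μ h hmeas hpos ψ k τ' - evolLp μ h hmeas hpos ψ k τ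
          - (τ' - τ) • evolLp μ h hmeas hpos ψ (k + 1) τ‖
        ≤ (3 * ((Nat.factorial (k + 2) : ℝ) / (-(τ.im / 2)) ^ (k + 2))
            * ‖τ' - τ‖ ^ 2) * ‖ψ‖ := this
      _ = (3 * ((Nat.factorial (k + 2) : ℝ) / (-(τ.im / 2)) ^ (k + 2))) * ‖ψ‖
            * ‖‖τ' - τ‖ ^ 2‖ := by
          rw [Real.norm_eq_abs, _root_.abs_of_nonneg (sq_nonneg _)]; ring
  have hsmall : (fun τ' : ℂ => ‖τ' - τ‖ ^ 2)
      =o[nhdsWithin τ {τ' : ℂ | τ'.im < 0}] fun τ' => τ' - τ := by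
    rw [Asymptotics.isLittleO_iff]
    intro ε hε
    have h1 : ∀ᶠ τ' in nhds τ, ‖τ' - τ‖ ≤ ε := by
      filter_upwards [Metric.closedBall_mem_nhds τ hε] with τ' hτ'
      rw [Metric.mem_closedBall, Complex.dist_eq] at hτ'
      exact hτ'
    refine Filter.Eventually.filter_mono nhdsWithin_le_nhds ?_
    filter_upwards [h1] with τ' hτ'
    rw [Real.norm_eq_abs, _root_.abs_of_nonneg (sq_nonneg _), sq]
    exact mul_le_mul_of_nonneg_right hτ' (norm_nonneg _)
  exact hbig.trans_isLittleO hsmall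

end Evol

/-- In the spectral model (H = multiplication by `h ≥ 0` on `L²(μ)`),
for `Im τ < 0` the `k`-th complex derivative of `τ ↦ e^{-iτH}ψ` equals
`(-i)^k H^k e^{-iτH}ψ`, i.e. `(i d/dτ)^k e^{-iτH}ψ = H^k e^{-iτH}ψ`. -/
theorem evolution_iterated_deriv
    {X : Type*} [MeasurableSpace X] (μ : Measure X)
    [TopologicalSpace.SeparableSpace (Lp ℂ 2 μ)]
    (h : X → ℝ) (hmeas : Measurable h) (hpos : ∀ x, 0 ≤ h x)
    (ψ : Lp ℂ 2 μ) (G : ℂ → Lp ℂ 2 μ)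
    (hG : ∀ τ : ℂ, τ.im < 0 →
      (⇑(G τ) : X → ℂ) =ᵐ[μ] fun x => Complex.exp (-(I * τ * (h x : ℂ))) * ψ x)
    (k : ℕ) (τ : ℂ) (hτ : τ.im < 0) :
    (⇑(iteratedDerivWithin k G {τ' : ℂ | τ'.im < 0} τ) : X → ℂ) =ᵐ[μ]
      fun x => (-I) ^ k * ((h x : ℂ)) ^ k * (Complex.exp (-(I * τ * (h x : ℂ))) * ψ x) := by
  set S : Set ℂ := {τ' : ℂ | τ'.im < 0} with hS
  have hSopen : IsOpen S := isOpen_Iio.preimage Complex.continuous_im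
  have hU : UniqueDiffOn ℂ S := hSopen.uniqueDiffOn
  -- `G` agrees with `evolLp ... 0` on `S`
  have hEq : Set.EqOn G (evolLp μ h hmeas hpos ψ 0) S := by
    intro σ hσ
    refine Lp.ext ((hG σ hσ).trans (Filter.EventuallyEq.symm ?_))
    filter_upwards [evolLp_coeFn hmeas hpos ψ 0 hσ] with x hx
    rw [hx, evolFun, pow_zero, one_mul]
  -- the iterated derivative of the explicit curve
  have hIter : ∀ n : ℕ, ∀ σ ∈ S,
      iteratedDerivWithin n (evolLp μ h hmeas hpos ψ 0) S σ = evolLp μ h hmeas hpos ψ n σ := by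
    intro n
    induction n with
    | zero => intro σ hσ; rw [iteratedDerivWithin_zero]
    | succ n IH =>
      intro σ hσ
      rw [iteratedDerivWithin_succ]
      have hcongr : derivWithin (iteratedDerivWithin n (evolLp μ h hmeas hpos ψ 0) S) S σ
          = derivWithin (evolLp μ h hmeas hpos ψ n) S σ :=
        derivWithin_congr (fun y hy => IH y hy) (IH σ hσ)
      rw [hcongr]
      exact (evol_hasDeriv hmeas hpos ψ n hσ).derivWithin (hU.uniqueDiffWithinAt hσ)
  have hfinal : iteratedDerivWithin k G S τ = evolLp μ h hmeas hpos ψ k τ := by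
    rw [iteratedDerivWithin_congr hEq hτ]
    exact hIter k τ hτ
  rw [hfinal]
  refine (evolLp_coeFn hmeas hpos ψ k hτ).trans ?_
  filter_upwards with x
  rw [evolFun, mul_pow]
end

section
/- Let F : {Im τ ≤ 0} → ℋ be a nonzero bounded ℋ-valued function, analytic on the open lower half-plane, continuous on ℝ. Then for every γ > 0, it is not the case that ‖F(t)‖ ≤ C e^{-γ|t|} for all t ∈ ℝ and some constant C > 0. (Exponential decay in both time directions is forbidden.) -/
open Complex MeasureTheory Real Filter Set intervalIntegral Metric
open scoped Topology FourierTransform Interval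

set_option linter.unusedSectionVars false
set_option linter.unusedVariables false

noncomputable section

namespace NoDecayAux

lemma integrable_exp_neg_mul_abs {c : ℝ} (hc : 0 < c) :
    Integrable fun t : ℝ => Real.exp (-c * |t|) := by
  have h1 : IntegrableOn (fun t : ℝ => Real.exp (-c * |t|)) (Ioi 0) := by
    apply (exp_neg_integrableOn_Ioi 0 hc).congr_fun _ measurableSet_Ioi
    intro x hx
    simp only []
    rw [abs_of_pos hx]
  rw [← integrableOn_univ, ← @Iio_union_Ici _ _ (0 : ℝ), integrableOn_union,
    integrableOn_Ici_iff_integrableOn_Ioi]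
  refine ⟨?_, h1⟩
  rw [← (Measure.measurePreserving_neg (volume : Measure ℝ)).integrableOn_comp_preimage
      (Homeomorph.neg ℝ).measurableEmbedding]
  simp only [Function.comp_def, abs_neg, neg_preimage, neg_Iio, neg_neg, neg_zero]
  exact h1


lemma re_aux (ξ ε : ℝ) (z : ℂ) :
    (-(I * ξ * z) - ε * z ^ 2).re = ξ * z.im + ε * z.im ^ 2 - ε * z.re ^ 2 := by
  simp [Complex.sub_re, Complex.neg_re, Complex.mul_re, Complex.mul_im, pow_two]
  ring


lemma im_aux (x y : ℝ) : ((x : ℂ) + y * I).im = y := by simp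

lemma re_aux2 (x y : ℝ) : ((x : ℂ) + y * I).re = x := by simp


lemma re_aux3 (z : ℂ) (t : ℝ) : (-(I * z * t)).re = t * z.im := by
  simp [Complex.mul_re, Complex.mul_im]
  ring


variable {E : Type*} [NormedAddCommGroup E] [NormedSpace ℂ E] [CompleteSpace E]

lemma norm_exp_smul (w : ℂ) (v : E) :
    ‖Complex.exp w • v‖ = Real.exp w.re * ‖v‖ := by
  rw [norm_smul, Complex.norm_exp]

lemma line_integrable (f : ℂ → E) {c K ε : ℝ} (hc0 : c ≤ 0)
    (hcont : ContinuousOn f {z : ℂ | z.im ≤ 0}) (hε : 0 < ε)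
    (hb : ∀ t : ℝ, ‖f (t + c * I)‖ ≤ K * Real.exp (-ε * t ^ 2)) :
    Integrable fun t : ℝ => f (t + c * I) := by
  have hcont' : Continuous fun t : ℝ => f (t + c * I) := by
    apply hcont.comp_continuous (by continuity)
    intro t
    simp only [Set.mem_setOf_eq, im_aux]
    exact hc0
  exact ((integrable_exp_neg_mul_sq hε).const_mul K).mono' hcont'.aestronglyMeasurable
    (Eventually.of_forall hb)


lemma contour_shift (f : ℂ → E) {a K ε : ℝ} (ha : a ≤ 0)
    (hd : DifferentiableOn ℂ f {z : ℂ | z.im < 0})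
    (hcont : ContinuousOn f {z : ℂ | z.im ≤ 0}) (hε : 0 < ε)
    (hb : ∀ z : ℂ, a ≤ z.im → z.im ≤ 0 → ‖f z‖ ≤ K * Real.exp (-ε * z.re ^ 2)) :
    ∫ t : ℝ, f (t + a * I) = ∫ t : ℝ, f t := by
  have hIa : Integrable fun t : ℝ => f (t + a * I) := by
    refine line_integrable (K := K) f ha hcont hε fun t => ?_
    exact hb _ (by rw [im_aux]) (by rw [im_aux]; exact ha) |>.trans_eq (by rw [re_aux2])
  have hI0' : Integrable fun t : ℝ => f (t + (0 : ℝ) * I) := by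
    refine line_integrable (K := K) f le_rfl hcont hε fun t => ?_
    exact hb _ (by rw [im_aux]; exact ha) (by rw [im_aux]) |>.trans_eq (by rw [re_aux2])
  have hI0 : Integrable fun t : ℝ => f t := by
    simpa using hI0'
  have key : ∀ A : ℝ,
      (∫ x : ℝ in -A..A, f (x + (0:ℝ) * I)) =
        (∫ x : ℝ in -A..A, f (x + a * I)) +
          (I • (∫ y : ℝ in a..(0:ℝ), f (A + y * I)) -
            I • ∫ y : ℝ in a..(0:ℝ), f (-(A:ℂ) + y * I)) := by
    intro A
    have Hc : ContinuousOn f ([[-A, A]] ×ℂ [[a, (0:ℝ)]]) := by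
      refine hcont.mono ?_
      intro z hz
      rw [Complex.mem_reProdIm] at hz
      have : z.im ∈ [[a, (0:ℝ)]] := hz.2
      rw [Set.uIcc_of_le ha] at this
      exact this.2
    have Hd : DifferentiableOn ℂ f
        (Ioo (min (-A) A) (max (-A) A) ×ℂ Ioo (min a 0) (max a 0)) := by
      refine hd.mono ?_
      intro z hz
      rw [Complex.mem_reProdIm] at hz
      have : z.im < max a 0 := hz.2.2
      rw [max_eq_right ha] at this
      exact this
    have H := Complex.integral_boundary_rect_eq_zero_of_continuousOn_of_differentiableOn f
      (⟨-A, a⟩ : ℂ) (⟨A, 0⟩ : ℂ) Hc Hd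
    simp only [Complex.ofReal_neg] at H ⊢
    apply eq_of_sub_eq_zero
    have h2 : (∫ x : ℝ in -A..A, f (x + (0:ℝ) * I)) -
        ((∫ x : ℝ in -A..A, f (x + a * I)) +
          (I • (∫ y : ℝ in a..(0:ℝ), f (A + y * I)) -
            I • ∫ y : ℝ in a..(0:ℝ), f (-(A:ℂ) + y * I))) =
        -((((∫ x : ℝ in -A..A, f (x + a * I)) - ∫ x : ℝ in -A..A, f (x + (0:ℝ) * I)) +
            I • ∫ y : ℝ in a..(0:ℝ), f ((A:ℂ) + y * I)) -
          I • ∫ y : ℝ in a..(0:ℝ), f (-(A:ℂ) + y * I)) := by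
      abel
    rw [h2, H, neg_zero]
  have hA : Tendsto (fun A : ℝ => -A) atTop atBot := tendsto_neg_atTop_atBot
  have T1 : Tendsto (fun A : ℝ => ∫ x : ℝ in -A..A, f (x + a * I)) atTop
      (𝓝 (∫ t : ℝ, f (t + a * I))) :=
    intervalIntegral_tendsto_integral hIa hA tendsto_id
  have T0 : Tendsto (fun A : ℝ => ∫ x : ℝ in -A..A, f (x + (0:ℝ) * I)) atTop
      (𝓝 (∫ t : ℝ, f t)) := by
    have := intervalIntegral_tendsto_integral hI0' hA tendsto_id
    simpa using this
  have hexp0 : Tendsto (fun A : ℝ => K * Real.exp (-ε * A ^ 2) * |(0:ℝ) - a|) atTop (𝓝 0) := by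
    have h2 : Tendsto (fun A : ℝ => ε * A ^ 2) atTop atTop :=
      (tendsto_pow_atTop two_ne_zero).const_mul_atTop hε
    have h3 : Tendsto (fun A : ℝ => -(ε * A ^ 2)) atTop atBot := tendsto_neg_atTop_atBot.comp h2
    have h4 : Tendsto (fun A : ℝ => Real.exp (-ε * A ^ 2)) atTop (𝓝 0) := by
      have := Real.tendsto_exp_atBot.comp h3
      simpa [Function.comp_def, neg_mul] using this
    have := (h4.const_mul K).mul_const |(0:ℝ) - a|
    simpa using this
  have TV : ∀ g : ℝ → ℂ, (∀ (A y : ℝ), ((g A + (y:ℂ) * I).im = y ∧ (g A + (y:ℂ) * I).re ^ 2 = A ^ 2)) →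
      Tendsto (fun A : ℝ => I • ∫ y : ℝ in a..(0:ℝ), f (g A + y * I)) atTop (𝓝 0) := by
    intro g hg
    apply squeeze_zero_norm _ hexp0
    intro A
    rw [norm_smul, Complex.norm_I, one_mul]
    apply intervalIntegral.norm_integral_le_of_norm_le_const
    intro y hy
    rw [Set.uIoc_of_le ha] at hy
    have h1 := hb (g A + y * I) (by rw [(hg A y).1]; exact hy.1.le) (by rw [(hg A y).1]; exact hy.2)
    rwa [(hg A y).2] at h1
  have TVp : Tendsto (fun A : ℝ => I • ∫ y : ℝ in a..(0:ℝ), f ((A:ℂ) + y * I)) atTop (𝓝 0) := by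
    apply TV (fun A => (A : ℂ))
    intro A y
    exact ⟨by simp, by simp⟩
  have TVn : Tendsto (fun A : ℝ => I • ∫ y : ℝ in a..(0:ℝ), f (-(A:ℂ) + y * I)) atTop (𝓝 0) := by
    apply TV (fun A => (-(A:ℂ)))
    intro A y
    refine ⟨by simp, ?_⟩
    have h1 : ((-(A:ℂ)) + (y:ℂ) * I).re = -A := by simp
    rw [h1]
    ring
  have TT : Tendsto (fun A : ℝ => ∫ x : ℝ in -A..A, f (x + (0:ℝ) * I)) atTop
      (𝓝 ((∫ t : ℝ, f (t + a * I)) + (0 - 0))) := by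
    simp only [key]
    exact T1.add (TVp.sub TVn)
  have := tendsto_nhds_unique T0 TT
  rw [this]
  simp


lemma fourier_vanish (h : ℝ → E) (hcont : Continuous h) (hint : Integrable h)
    (hz : ∀ ξ : ℝ, (∫ t : ℝ, Complex.exp (-(I * ξ * t)) • h t) = 0) : ∀ t : ℝ, h t = 0 := by
  have hF : 𝓕 h = 0 := by
    funext w
    rw [Real.fourier_real_eq_integral_exp_smul]
    have h1 : (fun v : ℝ => Complex.exp (↑(-2 * π * v * w) * Complex.I) • h v) =
        fun v : ℝ => Complex.exp (-(I * ↑(2 * π * w) * v)) • h v := by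
      funext v
      congr 1
      congr 1
      push_cast
      ring
    rw [h1, hz (2 * π * w)]
    rfl
  intro t
  have h1 : 𝓕⁻ (𝓕 h) t = h t :=
    hint.fourierInv_fourier_eq (by rw [hF]; exact integrable_zero _ _ _) hcont.continuousAt
  rw [hF] at h1
  rw [Real.fourierInv_eq] at h1
  simpa using h1.symm


lemma kernel_diff (ξ ε : ℝ) :
    Differentiable ℂ fun z : ℂ => Complex.exp (-(I * ξ * z) - ε * z ^ 2) := by
  apply Differentiable.cexp
  exact (((differentiable_const _).mul differentiable_id).neg).sub
    ((differentiable_pow 2).const_mul _)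


lemma transform_bound
    (F : ℂ → E) {M ξ ε : ℝ} (hM0 : 0 ≤ M)
    (hM : ∀ τ : ℂ, τ.im ≤ 0 → ‖F τ‖ ≤ M)
    (hd : DifferentiableOn ℂ F {τ : ℂ | τ.im < 0})
    (hc : ContinuousOn F {τ : ℂ | τ.im ≤ 0})
    (hξ : 0 < ξ) (hε : 0 < ε) :
    ‖∫ t : ℝ, Complex.exp (-(I * ξ * t) - ε * (t:ℂ) ^ 2) • F t‖ ≤
      M * Real.exp (-ξ ^ 2 / (4 * ε)) * Real.sqrt (π / ε) := by
  set a : ℝ := -(ξ / (2 * ε)) with ha_def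
  have ha : a ≤ 0 := by
    rw [ha_def]
    have : 0 ≤ ξ / (2 * ε) := by positivity
    linarith
  set f : ℂ → E := fun z => Complex.exp (-(I * ξ * z) - ε * z ^ 2) • F z with hf_def
  have hfd : DifferentiableOn ℂ f {z : ℂ | z.im < 0} :=
    ((kernel_diff ξ ε).differentiableOn).smul hd
  have hfc : ContinuousOn f {z : ℂ | z.im ≤ 0} :=
    ((kernel_diff ξ ε).continuous.continuousOn).smul hc
  have hb : ∀ z : ℂ, a ≤ z.im → z.im ≤ 0 → ‖f z‖ ≤ M * Real.exp (-ε * z.re ^ 2) := by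
    intro z h1 h2
    rw [hf_def]
    simp only []
    rw [norm_exp_smul, re_aux]
    have hkey : ξ * z.im + ε * z.im ^ 2 ≤ 0 := by
      have h3 : -ξ ≤ z.im * (2 * ε) := by
        have h1' : -ξ / (2 * ε) ≤ z.im := by rw [neg_div]; exact h1
        rwa [div_le_iff₀ (by positivity)] at h1'
      have h4 := mul_le_mul_of_nonpos_right h3 h2
      have h5 : ξ * z.im ≤ 0 := mul_nonpos_of_nonneg_of_nonpos hξ.le h2
      nlinarith [sq_nonneg z.im]
    have e1 : Real.exp (ξ * z.im + ε * z.im ^ 2 - ε * z.re ^ 2) ≤ Real.exp (-ε * z.re ^ 2) := by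
      apply Real.exp_le_exp.mpr
      linarith
    calc Real.exp (ξ * z.im + ε * z.im ^ 2 - ε * z.re ^ 2) * ‖F z‖
        ≤ Real.exp (-ε * z.re ^ 2) * M :=
          mul_le_mul e1 (hM z h2) (norm_nonneg _) (Real.exp_pos _).le
      _ = M * Real.exp (-ε * z.re ^ 2) := mul_comm _ _
  have shift := contour_shift f ha hfd hfc hε hb
  rw [show (∫ t : ℝ, Complex.exp (-(I * ξ * t) - ε * (t:ℂ) ^ 2) • F t) = ∫ t : ℝ, f t from rfl,
    ← shift]
  have hptw : ∀ t : ℝ, ‖f (t + a * I)‖ ≤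
      (M * Real.exp (-ξ ^ 2 / (4 * ε))) * Real.exp (-ε * t ^ 2) := by
    intro t
    have h1 : ((t : ℂ) + a * I).im = a := by simp
    have h2 : ((t : ℂ) + a * I).re = t := by simp
    have h3 := hb ((t : ℂ) + a * I) (by rw [h1]) (by rw [h1]; exact ha)
    rw [hf_def]
    simp only []
    rw [norm_exp_smul, re_aux, h1, h2]
    have hval : ξ * a + ε * a ^ 2 = -ξ ^ 2 / (4 * ε) := by
      rw [ha_def]
      field_simp
      ring
    have e2 : ξ * a + ε * a ^ 2 - ε * t ^ 2 = -ξ ^ 2 / (4 * ε) + -ε * t ^ 2 := by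
      rw [hval]; ring
    rw [e2, Real.exp_add]
    calc Real.exp (-ξ ^ 2 / (4 * ε)) * Real.exp (-ε * t ^ 2) * ‖F ((t : ℂ) + a * I)‖
        ≤ Real.exp (-ξ ^ 2 / (4 * ε)) * Real.exp (-ε * t ^ 2) * M := by
          apply mul_le_mul_of_nonneg_left (hM _ (by rw [h1]; exact ha)) (by positivity)
      _ = M * Real.exp (-ξ ^ 2 / (4 * ε)) * Real.exp (-ε * t ^ 2) := by ring
  have hgauss : Integrable fun t : ℝ => (M * Real.exp (-ξ ^ 2 / (4 * ε))) * Real.exp (-ε * t ^ 2) :=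
    (integrable_exp_neg_mul_sq hε).const_mul _
  calc ‖∫ t : ℝ, f (t + a * I)‖
      ≤ ∫ t : ℝ, (M * Real.exp (-ξ ^ 2 / (4 * ε))) * Real.exp (-ε * t ^ 2) :=
        norm_integral_le_of_norm_le hgauss (Eventually.of_forall hptw)
    _ = (M * Real.exp (-ξ ^ 2 / (4 * ε))) * ∫ t : ℝ, Real.exp (-ε * t ^ 2) :=
        integral_const_mul _ _
    _ = M * Real.exp (-ξ ^ 2 / (4 * ε)) * Real.sqrt (π / ε) := by
        rw [integral_gaussian]


lemma aux_limit {M c : ℝ} (hc : 0 < c) :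
    Tendsto (fun x : ℝ => M * Real.exp (-(c * x)) * Real.sqrt (π * x)) atTop (𝓝 0) := by
  have key : Tendsto (fun x : ℝ => x * Real.exp (-(c * x))) atTop (𝓝 0) := by
    have h1 := (tendsto_pow_mul_exp_neg_atTop_nhds_zero 1).comp
      (Tendsto.const_mul_atTop hc tendsto_id)
    have h2 := h1.const_mul (1 / c)
    rw [mul_zero] at h2
    apply h2.congr
    intro x
    simp only [Function.comp_apply, pow_one, id_eq]
    field_simp
  have h3 := key.const_mul (|M| * Real.sqrt π)
  rw [mul_zero] at h3
  apply squeeze_zero_norm' _ h3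
  filter_upwards [eventually_ge_atTop (1 : ℝ)] with x hx
  have hx0 : (0:ℝ) ≤ x := by linarith
  have hsx : Real.sqrt x ≤ x := by
    have h := Real.sqrt_le_sqrt (show x ≤ x ^ 2 by nlinarith)
    rwa [Real.sqrt_sq hx0] at h
  have h4 : Real.sqrt (π * x) ≤ Real.sqrt π * x := by
    rw [Real.sqrt_mul pi_pos.le]
    exact mul_le_mul_of_nonneg_left hsx (Real.sqrt_nonneg _)
  calc ‖M * Real.exp (-(c * x)) * Real.sqrt (π * x)‖
      = |M| * Real.exp (-(c * x)) * Real.sqrt (π * x) := by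
        rw [Real.norm_eq_abs, abs_mul, abs_mul, abs_of_pos (Real.exp_pos _),
          _root_.abs_of_nonneg (Real.sqrt_nonneg _)]
    _ ≤ |M| * Real.exp (-(c * x)) * (Real.sqrt π * x) := by
        apply mul_le_mul_of_nonneg_left h4 (by positivity)
    _ = |M| * Real.sqrt π * (x * Real.exp (-(c * x))) := by ring


lemma transform_vanish_pos
    (F : ℂ → E) {M C γ : ℝ} (hM0 : 0 ≤ M)
    (hM : ∀ τ : ℂ, τ.im ≤ 0 → ‖F τ‖ ≤ M)
    (hd : DifferentiableOn ℂ F {τ : ℂ | τ.im < 0})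
    (hc : ContinuousOn F {τ : ℂ | τ.im ≤ 0})
    (hγ : 0 < γ) (hC : ∀ t : ℝ, ‖F (t:ℂ)‖ ≤ C * Real.exp (-γ * |t|))
    {ξ : ℝ} (hξ : 0 < ξ) :
    (∫ t : ℝ, Complex.exp (-(I * ξ * t)) • F t) = 0 := by
  have hFr_cont : Continuous fun t : ℝ => F (t : ℂ) := by
    apply hc.comp_continuous Complex.continuous_ofReal
    intro t
    simp [Set.mem_setOf_eq]
  set εn : ℕ → ℝ := fun n => ((n : ℝ) + 1)⁻¹ with hεn_def
  have hεn : ∀ n, 0 < εn n := fun n => by positivity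
  set S : ℕ → E := fun n => ∫ t : ℝ, Complex.exp (-(I * ξ * t) - εn n * (t:ℂ) ^ 2) • F t
    with hS_def
  -- dominated convergence: S n → ∫ exp(-iξt) • F t
  have h1 : Tendsto S atTop (𝓝 (∫ t : ℝ, Complex.exp (-(I * ξ * t)) • F t)) := by
    apply tendsto_integral_of_dominated_convergence (fun t => C * Real.exp (-γ * |t|))
    · intro n
      apply Continuous.aestronglyMeasurable
      apply Continuous.smul _ hFr_cont
      apply Complex.continuous_exp.comp
      continuity
    · exact (integrable_exp_neg_mul_abs hγ).const_mul C
    · intro n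
      filter_upwards with t
      rw [norm_exp_smul, re_aux]
      simp only [Complex.ofReal_im, Complex.ofReal_re]
      have : Real.exp (ξ * 0 + εn n * 0 ^ 2 - εn n * t ^ 2) ≤ 1 := by
        rw [Real.exp_le_one_iff]
        have := sq_nonneg t
        have := (hεn n).le
        nlinarith
      calc Real.exp (ξ * 0 + εn n * 0 ^ 2 - εn n * t ^ 2) * ‖F (t:ℂ)‖
          ≤ 1 * ‖F (t:ℂ)‖ := mul_le_mul_of_nonneg_right this (norm_nonneg _)
        _ = ‖F (t:ℂ)‖ := one_mul _
        _ ≤ C * Real.exp (-γ * |t|) := hC t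
    · filter_upwards with t
      have harg : Tendsto (fun n => -(I * ξ * t) - (εn n : ℂ) * (t:ℂ) ^ 2) atTop
          (𝓝 (-(I * ξ * t))) := by
        have h0 : Tendsto (fun n => (εn n : ℂ)) atTop (𝓝 0) := by
          have : Tendsto εn atTop (𝓝 0) := tendsto_one_div_add_atTop_nhds_zero_nat.congr
            (fun n => by rw [hεn_def]; simp [one_div])
          have := (Complex.continuous_ofReal.tendsto 0).comp this
          exact this
        have h2 : Tendsto (fun n => (εn n : ℂ) * (t:ℂ) ^ 2) atTop (𝓝 0) := by
          simpa using h0.mul_const ((t:ℂ) ^ 2)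
        have h3 := (tendsto_const_nhds (x := -(I * (ξ:ℂ) * (t:ℂ)))).sub h2
        simpa using h3
      exact ((Complex.continuous_exp.tendsto _).comp harg).smul_const (F (t:ℂ))
  -- the bound: S n → 0
  have h2 : Tendsto S atTop (𝓝 0) := by
    have hb : ∀ n, ‖S n‖ ≤ M * Real.exp (-(ξ ^ 2 / 4 * ((n:ℝ) + 1))) *
        Real.sqrt (π * ((n:ℝ) + 1)) := by
      intro n
      have := transform_bound F hM0 hM hd hc hξ (hεn n)
      convert this using 3
      · congr 1
        have hn : ((n:ℝ) + 1) ≠ 0 := by positivity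
        rw [hεn_def]
        simp only []
        field_simp
      · rw [hεn_def]
        simp only []
        have hn : ((n:ℝ) + 1) ≠ 0 := by positivity
        field_simp
    have hlim : Tendsto (fun n : ℕ => M * Real.exp (-(ξ ^ 2 / 4 * ((n:ℝ) + 1))) *
        Real.sqrt (π * ((n:ℝ) + 1))) atTop (𝓝 0) := by
      have hc4 : 0 < ξ ^ 2 / 4 := by positivity
      have hcomp : Tendsto (fun n : ℕ => ((n:ℝ) + 1)) atTop atTop :=
        tendsto_atTop_add_const_right _ 1 tendsto_natCast_atTop_atTop
      have := (aux_limit (M := M) hc4).comp hcomp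
      apply this.congr
      intro n
      simp only [Function.comp_apply]
    exact squeeze_zero_norm hb hlim
  exact tendsto_nhds_unique h1 h2


lemma Phi_diff (F : ℂ → E) {C γ : ℝ} (hγ : 0 < γ) (hC0 : 0 ≤ C)
    (hcont : Continuous fun t : ℝ => F (t:ℂ))
    (hC : ∀ t : ℝ, ‖F (t:ℂ)‖ ≤ C * Real.exp (-γ * |t|)) :
    DifferentiableOn ℂ (fun z : ℂ => ∫ t : ℝ, Complex.exp (-(I * z * t)) • F (t:ℂ))
      {z : ℂ | |z.im| < γ} := by
  intro z₀ hz₀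
  rw [Set.mem_setOf_eq] at hz₀
  set δ : ℝ := (γ - |z₀.im|) / 2 with hδ_def
  have hδ : 0 < δ := by rw [hδ_def]; linarith
  have hγδ : γ = |z₀.im| + 2 * δ := by rw [hδ_def]; ring
  -- kernel continuity in t for fixed z
  have kercont : ∀ z : ℂ, Continuous fun t : ℝ => Complex.exp (-(I * z * t)) := by
    intro z
    apply Complex.continuous_exp.comp
    exact (continuous_const.mul Complex.continuous_ofReal).neg
  have hmeas : ∀ z : ℂ, AEStronglyMeasurable
      (fun t : ℝ => Complex.exp (-(I * z * t)) • F (t:ℂ)) volume :=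
    fun z => ((kercont z).smul hcont).aestronglyMeasurable
  have hint : Integrable fun t : ℝ => Complex.exp (-(I * z₀ * t)) • F (t:ℂ) := by
    apply ((integrable_exp_neg_mul_abs (show (0:ℝ) < 2*δ by linarith)).const_mul C).mono'
      (hmeas z₀)
    filter_upwards with t
    rw [norm_exp_smul, re_aux3]
    have h1 : t * z₀.im ≤ |t| * |z₀.im| := by
      calc t * z₀.im ≤ |t * z₀.im| := le_abs_self _
        _ = |t| * |z₀.im| := abs_mul _ _
    calc Real.exp (t * z₀.im) * ‖F (t:ℂ)‖
        ≤ Real.exp (|t| * |z₀.im|) * (C * Real.exp (-γ * |t|)) :=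
          mul_le_mul (Real.exp_le_exp.mpr h1) (hC t) (norm_nonneg _) (Real.exp_pos _).le
      _ = C * Real.exp (|t| * |z₀.im| + -γ * |t|) := by rw [Real.exp_add]; ring
      _ = C * Real.exp (-(2*δ) * |t|) := by rw [hγδ]; ring_nf
  set bound : ℝ → ℝ := fun t => C * ((2/δ) * Real.exp (-(δ/2) * |t|)) with hbound_def
  have hbound_int : Integrable bound :=
    ((integrable_exp_neg_mul_abs (show (0:ℝ) < δ/2 by linarith)).const_mul (2/δ)).const_mul C
  have key := hasDerivAt_integral_of_dominated_loc_of_deriv_le (𝕜 := ℂ)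
    (F := fun (z : ℂ) (t : ℝ) => Complex.exp (-(I * z * t)) • F (t:ℂ))
    (F' := fun (z : ℂ) (t : ℝ) => (Complex.exp (-(I * z * t)) * -(I * t)) • F (t:ℂ))
    (x₀ := z₀) (s := ball z₀ δ) (bound := bound) (ball_mem_nhds z₀ hδ)
    (Eventually.of_forall hmeas) hint
    (((((kercont z₀).mul ((continuous_const.mul Complex.continuous_ofReal).neg)).smul hcont)).aestronglyMeasurable)
    ?_ hbound_int ?_
  · exact key.2.differentiableAt.differentiableWithinAt
  · -- the bound on the derivative
    filter_upwards with t
    intro z hz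
    have hz_im : |z.im| ≤ |z₀.im| + δ := by
      have h1 : |z.im - z₀.im| ≤ ‖z - z₀‖ := by
        have := Complex.abs_im_le_norm (z - z₀)
        simpa using this
      have h2 : ‖z - z₀‖ < δ := by
        rw [mem_ball, Complex.dist_eq] at hz
        exact hz
      calc |z.im| = |z₀.im + (z.im - z₀.im)| := by ring_nf
        _ ≤ |z₀.im| + |z.im - z₀.im| := abs_add_le _ _
        _ ≤ |z₀.im| + δ := by linarith
    rw [norm_smul, norm_mul, Complex.norm_exp, re_aux3]
    have hnt : ‖-(I * (t:ℂ))‖ = |t| := by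
      rw [norm_neg, norm_mul, Complex.norm_I, one_mul, Complex.norm_real, Real.norm_eq_abs]
    rw [hnt]
    have h1 : t * z.im ≤ (|z₀.im| + δ) * |t| := by
      calc t * z.im ≤ |t| * |z.im| := by
            calc t * z.im ≤ |t * z.im| := le_abs_self _
              _ = |t| * |z.im| := abs_mul _ _
        _ ≤ |t| * (|z₀.im| + δ) := by
            apply mul_le_mul_of_nonneg_left hz_im (abs_nonneg _)
        _ = (|z₀.im| + δ) * |t| := mul_comm _ _
    have h6 : |t| ≤ (2/δ) * Real.exp ((δ/2) * |t|) := by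
      have h5 := Real.add_one_le_exp ((δ/2) * |t|)
      rw [div_mul_eq_mul_div, le_div_iff₀ hδ]
      nlinarith
    calc Real.exp (t * z.im) * |t| * ‖F (t:ℂ)‖
        ≤ Real.exp ((|z₀.im| + δ) * |t|) * ((2/δ) * Real.exp ((δ/2) * |t|)) *
            (C * Real.exp (-γ * |t|)) := by
          apply mul_le_mul _ (hC t) (norm_nonneg _) (by positivity)
          apply mul_le_mul (Real.exp_le_exp.mpr h1) h6 (abs_nonneg _) (Real.exp_pos _).le
      _ = C * ((2/δ) * (Real.exp ((|z₀.im| + δ) * |t|) * Real.exp ((δ/2) * |t|) *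
            Real.exp (-γ * |t|))) := by ring
      _ = bound t := by
          rw [hbound_def]
          simp only []
          rw [← Real.exp_add, ← Real.exp_add]
          congr 2
          rw [hγδ]
          ring
  · -- differentiability in z
    filter_upwards with t
    intro z hz
    have harg : ∀ w : ℂ, -(I * w * (t:ℂ)) = -(I * (t:ℂ)) * w := fun w => by ring
    simp only [harg]
    have h0 : HasDerivAt (fun w : ℂ => -(I * (t:ℂ)) * w) (-(I * (t:ℂ))) z := by
      simpa using (hasDerivAt_id z).const_mul (-(I * (t:ℂ)))
    exact (h0.cexp).smul_const (F (t:ℂ))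


end NoDecayAux

open NoDecayAux

/-- a nonzero bounded Hilbert-space-valued function, analytic on the open
lower half-plane and continuous up to the real axis, cannot decay exponentially in both
time directions on the real line. -/
theorem no_two_sided_exponential_decay
    {H : Type*} [NormedAddCommGroup H] [InnerProductSpace ℂ H] [CompleteSpace H]
    (F : ℂ → H)
    (hbdd : ∃ C : ℝ, ∀ τ : ℂ, τ.im ≤ 0 → ‖F τ‖ ≤ C)
    (hd : DifferentiableOn ℂ F {τ : ℂ | τ.im < 0})
    (hc : ContinuousOn F {τ : ℂ | τ.im ≤ 0})
    (hnz : ∃ τ : ℂ, τ.im ≤ 0 ∧ F τ ≠ 0) :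
    ∀ γ : ℝ, 0 < γ →
      ¬ ∃ C : ℝ, 0 < C ∧ ∀ t : ℝ, ‖F (t : ℂ)‖ ≤ C * Real.exp (-γ * |t|) := by
  intro γ hγ
  rintro ⟨C, hC0, hC⟩
  obtain ⟨M₀, hM₀⟩ := hbdd
  set M : ℝ := max M₀ 0 with hM_def
  have hM0 : 0 ≤ M := le_max_right _ _
  have hM : ∀ τ : ℂ, τ.im ≤ 0 → ‖F τ‖ ≤ M := fun τ hτ => (hM₀ τ hτ).trans (le_max_left _ _)
  have hFr_cont : Continuous fun t : ℝ => F (t : ℂ) := by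
    apply hc.comp_continuous Complex.continuous_ofReal
    intro t
    simp [Set.mem_setOf_eq]
  have hFr_int : Integrable fun t : ℝ => F (t : ℂ) :=
    ((integrable_exp_neg_mul_abs hγ).const_mul C).mono' hFr_cont.aestronglyMeasurable
      (Eventually.of_forall hC)
  -- Step 1: the "Fourier transform" Φ vanishes on the positive real axis, hence (by analytic
  -- continuation on the strip) on all of ℝ.
  set Φ : ℂ → H := fun z => ∫ t : ℝ, Complex.exp (-(I * z * t)) • F (t:ℂ) with hΦ_def
  have hΦpos : ∀ ξ : ℝ, 0 < ξ → Φ ξ = 0 := fun ξ hξ =>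
    transform_vanish_pos F hM0 hM hd hc hγ hC hξ
  have hSopen : IsOpen {z : ℂ | |z.im| < γ} := by
    have : {z : ℂ | |z.im| < γ} = Complex.im ⁻¹' (Ioo (-γ) γ) := by
      ext z
      simp [abs_lt]
    rw [this]
    exact isOpen_Ioo.preimage Complex.continuous_im
  have hΦdiff : DifferentiableOn ℂ Φ {z : ℂ | |z.im| < γ} :=
    Phi_diff F hγ hC0.le hFr_cont hC
  have hΦanalytic : AnalyticOnNhd ℂ Φ {z : ℂ | |z.im| < γ} :=
    hΦdiff.analyticOnNhd hSopen
  have hSpre : IsPreconnected {z : ℂ | |z.im| < γ} := by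
    have hconv : Convex ℝ {z : ℂ | |z.im| < γ} := by
      have : {z : ℂ | |z.im| < γ} = {z : ℂ | z.im < γ} ∩ {z : ℂ | -γ < z.im} := by
        ext z
        simp [abs_lt, and_comm]
      rw [this]
      exact (convex_halfSpace_im_lt γ).inter (convex_halfSpace_im_gt (-γ))
    exact hconv.isPreconnected
  have hmem1 : (1 : ℂ) ∈ {z : ℂ | |z.im| < γ} := by simp [hγ]
  have hfreq : ∃ᶠ z in 𝓝[≠] (1 : ℂ), Φ z = 0 := by
    have hseq : Tendsto (fun n : ℕ => (((1 + ((n:ℝ)+1)⁻¹ : ℝ)) : ℂ)) atTop (𝓝[≠] (1 : ℂ)) := by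
      apply tendsto_nhdsWithin_of_tendsto_nhds_of_eventually_within
      · have h0 : Tendsto (fun n : ℕ => (1 + ((n:ℝ)+1)⁻¹ : ℝ)) atTop (𝓝 1) := by
          have : Tendsto (fun n : ℕ => ((n:ℝ)+1)⁻¹) atTop (𝓝 0) :=
            tendsto_one_div_add_atTop_nhds_zero_nat.congr (fun n => by simp [one_div])
          have := this.const_add 1
          simpa using this
        have := (Complex.continuous_ofReal.tendsto 1).comp h0
        simpa [Function.comp_def] using this
      · filter_upwards with n
        simp only [Set.mem_compl_iff, Set.mem_singleton_iff]
        intro hcontra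
        have : (1 + ((n:ℝ)+1)⁻¹ : ℝ) = 1 := by exact_mod_cast hcontra
        have hpos : (0:ℝ) < ((n:ℝ)+1)⁻¹ := by positivity
        linarith
    apply hseq.frequently
    apply Frequently.of_forall
    intro n
    exact hΦpos _ (by positivity)
  have hΦzero : EqOn Φ 0 {z : ℂ | |z.im| < γ} :=
    hΦanalytic.eqOn_zero_of_preconnected_of_frequently_eq_zero hSpre hmem1 hfreq
  have hΦreal : ∀ ξ : ℝ, Φ ξ = 0 := fun ξ => hΦzero (by simp [hγ])
  -- Step 2: F vanishes on the real axis.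
  have hFreal : ∀ t : ℝ, F (t : ℂ) = 0 :=
    fourier_vanish _ hFr_cont hFr_int hΦreal
  -- Step 3: F vanishes on the whole closed lower half-plane.
  obtain ⟨τ₀, hτ₀, hFτ₀⟩ := hnz
  set a : ℝ := τ₀.im with ha_def
  have ha : a ≤ 0 := hτ₀
  set h : ℝ → H := fun t => Complex.exp (-(t:ℂ)^2 - 2*(t:ℂ)*(a:ℂ)*I) • F ((t:ℂ) + (a:ℂ)*I)
    with hh_def
  have hline_im : ∀ t : ℝ, ((t:ℂ) + (a:ℂ)*I).im = a := fun t => by simp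
  have hh_cont : Continuous h := by
    apply Continuous.smul
    · apply Complex.continuous_exp.comp
      apply Continuous.sub
      · exact (Complex.continuous_ofReal.pow 2).neg
      · exact ((continuous_const.mul Complex.continuous_ofReal).mul continuous_const).mul
          continuous_const
    · apply hc.comp_continuous (by continuity)
      intro t
      rw [Set.mem_setOf_eq, hline_im]
      exact ha
  have hh_int : Integrable h := by
    apply ((integrable_exp_neg_mul_sq one_pos).const_mul M).mono' hh_cont.aestronglyMeasurable
    filter_upwards with t
    rw [hh_def]
    simp only []
    rw [norm_exp_smul]
    have hre : (-(t:ℂ)^2 - 2*(t:ℂ)*(a:ℂ)*I).re = -t^2 := by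
      simp [Complex.sub_re, Complex.neg_re, Complex.mul_re, Complex.mul_im, pow_two]
    rw [hre]
    have : ‖F ((t:ℂ) + (a:ℂ)*I)‖ ≤ M := hM _ (by rw [hline_im]; exact ha)
    calc Real.exp (-t^2) * ‖F ((t:ℂ) + (a:ℂ)*I)‖ ≤ Real.exp (-t^2) * M :=
          mul_le_mul_of_nonneg_left this (Real.exp_pos _).le
      _ = M * Real.exp (-1 * t^2) := by rw [neg_one_mul]; ring
  have hz : ∀ ξ : ℝ, (∫ t : ℝ, Complex.exp (-(I * ξ * t)) • h t) = 0 := by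
    intro ξ
    set f : ℂ → H := fun z => Complex.exp (-(I * ξ * z) - z^2) • F z with hf_def
    have hkd : Differentiable ℂ fun z : ℂ => Complex.exp (-(I * (ξ:ℂ) * z) - z^2) := by
      apply Differentiable.cexp
      exact (((differentiable_const _).mul differentiable_id).neg).sub (differentiable_pow 2)
    have hfd : DifferentiableOn ℂ f {z : ℂ | z.im < 0} := (hkd.differentiableOn).smul hd
    have hfc : ContinuousOn f {z : ℂ | z.im ≤ 0} := (hkd.continuous.continuousOn).smul hc
    have hre5 : ∀ z : ℂ, (-(I * (ξ:ℂ) * z) - z^2).re = ξ * z.im + z.im^2 - z.re^2 := by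
      intro z
      have := re_aux ξ 1 z
      simpa using this
    set K : ℝ := M * Real.exp (|ξ| * |a| + a^2) with hK_def
    have hb : ∀ z : ℂ, a ≤ z.im → z.im ≤ 0 → ‖f z‖ ≤ K * Real.exp (-1 * z.re^2) := by
      intro z h1 h2
      rw [hf_def]
      simp only []
      rw [norm_exp_smul, hre5]
      have hima : |z.im| ≤ |a| := by
        rw [abs_of_nonpos h2, abs_of_nonpos ha]
        linarith
      have e1 : ξ * z.im ≤ |ξ| * |a| := by
        calc ξ * z.im ≤ |ξ * z.im| := le_abs_self _
          _ = |ξ| * |z.im| := abs_mul _ _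
          _ ≤ |ξ| * |a| := mul_le_mul_of_nonneg_left hima (abs_nonneg _)
      have e2 : z.im^2 ≤ a^2 := by nlinarith
      have e3 : Real.exp (ξ * z.im + z.im^2 - z.re^2) ≤
          Real.exp (|ξ| * |a| + a^2) * Real.exp (-1 * z.re^2) := by
        rw [← Real.exp_add]
        apply Real.exp_le_exp.mpr
        linarith
      calc Real.exp (ξ * z.im + z.im^2 - z.re^2) * ‖F z‖
          ≤ (Real.exp (|ξ| * |a| + a^2) * Real.exp (-1 * z.re^2)) * M :=
            mul_le_mul e3 (hM z h2) (norm_nonneg _) (by positivity)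
        _ = K * Real.exp (-1 * z.re^2) := by rw [hK_def]; ring
    have shift := contour_shift f ha hfd hfc one_pos hb
    have hrhs : (∫ t : ℝ, f (t:ℂ)) = 0 := by
      have : (fun t : ℝ => f (t:ℂ)) = fun _ => (0:H) := by
        funext t
        rw [hf_def]
        simp only []
        rw [hFreal t, smul_zero]
      rw [this, MeasureTheory.integral_zero]
    have hexpand : ∀ t : ℝ, f ((t:ℂ) + (a:ℂ)*I) =
        Complex.exp ((ξ:ℂ)*(a:ℂ) + (a:ℂ)^2) • (Complex.exp (-(I * ξ * t)) • h t) := by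
      intro t
      rw [hf_def, hh_def]
      simp only []
      rw [smul_smul, smul_smul, ← Complex.exp_add, ← Complex.exp_add]
      congr 1
      congr 1
      linear_combination (-((ξ:ℂ)*(a:ℂ)) - (a:ℂ)^2) * Complex.I_sq
    have h0 : Complex.exp ((ξ:ℂ)*(a:ℂ) + (a:ℂ)^2) • (∫ t : ℝ, Complex.exp (-(I * ξ * t)) • h t)
        = 0 := by
      rw [← MeasureTheory.integral_smul]
      rw [show (fun t : ℝ => Complex.exp ((ξ:ℂ)*(a:ℂ) + (a:ℂ)^2) •
          (Complex.exp (-(I * ξ * t)) • h t)) = fun t : ℝ => f ((t:ℂ) + (a:ℂ)*I) from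
        funext fun t => (hexpand t).symm]
      rw [shift]
      exact hrhs
    have := smul_eq_zero.mp h0
    rcases this with h1 | h2
    · exact absurd h1 (Complex.exp_ne_zero _)
    · exact h2
  have hhzero := fourier_vanish h hh_cont hh_int hz
  have := hhzero τ₀.re
  rw [hh_def] at this
  simp only [] at this
  rcases smul_eq_zero.mp this with h1 | h2
  · exact absurd h1 (Complex.exp_ne_zero _)
  · apply hFτ₀
    rw [← Complex.re_add_im τ₀]
    exact h2
end
end
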